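/- Let G be a graph with non-empty edge set. Then the spectral radius satisfies ρ(G) ≥ min{√(d(u)d(v)) : uv ∈ E(G)}, where d(u) denotes the degree of u in G. -/

import Mathlib

open Finset
open scoped Classical

/-- The adjacency matrix of a simple graph over ℝ. -/
noncomputable def adjMat {V : Type*} [Fintype V] (G : SimpleGraph V) :
    Matrix V V ℝ := fun i j => if G.Adj i j then 1 else 0

/-- The spectral radius of a graph: the largest (real) eigenvalue of its
adjacency matrix. -/
noncomputable def specRad {V : Type*} [Fintype V] (G : SimpleGraph V) : ℝ :=
  sSup {μ : ℝ | Module.End.HasEigenvalue (Matrix.mulVecLin (adjMat G)) μ}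

/-- The signless Laplacian matrix `Q = D + A` of a simple graph. -/
noncomputable def qMat {V : Type*} [Fintype V] (G : SimpleGraph V) :
    Matrix V V ℝ := fun i j =>
  (if i = j then ((univ.filter fun u => G.Adj i u).card : ℝ) else 0) +
    (if G.Adj i j then 1 else 0)

/-- The signless Laplacian spectral radius of a graph: the largest (real)
eigenvalue of `Q = D + A`. -/
noncomputable def qRad {V : Type*} [Fintype V] (G : SimpleGraph V) : ℝ :=
  sSup {μ : ℝ | Module.End.HasEigenvalue (Matrix.mulVecLin (qMat G)) μ}

/-- `G` has a spanning `k`-ended-tree: a spanning tree with at most `k`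
leaves (vertices of degree 1 in the tree). -/
noncomputable def HasSpanningKEndedTree {V : Type*} [Fintype V]
    (G : SimpleGraph V) (k : ℕ) : Prop :=
  ∃ T : SimpleGraph V, T ≤ G ∧ T.IsTree ∧
    (univ.filter fun v => T.degree v = 1).card ≤ k

/-- `G` has a spanning tree with leaf degree at most `k`: every vertex of the
tree is adjacent (in the tree) to at most `k` leaves of the tree. -/
noncomputable def HasSpanningTreeLeafDegLE {V : Type*} [Fintype V]
    (G : SimpleGraph V) (k : ℕ) : Prop :=
  ∃ T : SimpleGraph V, T ≤ G ∧ T.IsTree ∧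
    ∀ v, (univ.filter fun u => T.Adj v u ∧ T.degree u = 1).card ≤ k

/-- The graph `K₁ ∨ (K_{n-k-1} + kK₁)` on `n` vertices: vertex `0` is joined to
everything, vertices `0, …, n-k-1` form a clique `K_{n-k}`, and the last `k`
vertices are only adjacent to vertex `0`. -/
def oneJoinCliquePlusIso (n k : ℕ) : SimpleGraph (Fin n) :=
  SimpleGraph.fromRel fun i j => i.val = 0 ∨ (i.val < n - k ∧ j.val < n - k)

/-- **Lemma (Li–Ning).**  For a graph `G` with non-empty edge set,
`ρ(G) ≥ min {√(d(u)d(v)) : uv ∈ E(G)}`. -/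
-- aux 1: eigenvalue set of a matrix with entries of abs ≤ 1 is bounded above
lemma aux_bddAbove {V : Type*} [Fintype V] (A : Matrix V V ℝ) (hA : ∀ i j, |A i j| ≤ 1) :
    BddAbove {μ : ℝ | Module.End.HasEigenvalue (Matrix.mulVecLin A) μ} := by
  refine ⟨(Fintype.card V : ℝ), fun μ hμ => ?_⟩
  obtain ⟨y, hy⟩ := Module.End.HasEigenvalue.exists_hasEigenvector hμ
  have hy0 := hy.2
  have happ : A.mulVecLin y = μ • y := hy.apply_eq_smul
  obtain ⟨j, hj⟩ := Function.ne_iff.mp hy0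
  haveI : Nonempty V := ⟨j⟩
  obtain ⟨i, -, hi⟩ := Finset.exists_max_image Finset.univ (fun i => |y i|) ⟨j, Finset.mem_univ j⟩
  have hyi : 0 < |y i| := lt_of_lt_of_le (abs_pos.mpr hj) (hi j (Finset.mem_univ j))
  have key : |μ| * |y i| ≤ (Fintype.card V : ℝ) * |y i| := by
    have h1 : |μ * y i| = |(A.mulVecLin y) i| := by rw [happ]; simp [abs_mul]
    calc |μ| * |y i| = |μ * y i| := (abs_mul _ _).symm
      _ = |∑ k, A i k * y k| := by rw [h1]; simp [Matrix.mulVecLin_apply, Matrix.mulVec, dotProduct]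
      _ ≤ ∑ k, |A i k * y k| := Finset.abs_sum_le_sum_abs _ _
      _ ≤ ∑ _k : V, |y i| := by
          refine Finset.sum_le_sum fun k _ => ?_
          rw [abs_mul]
          calc |A i k| * |y k| ≤ 1 * |y i| := by
                exact mul_le_mul (hA i k) (hi k (Finset.mem_univ k)) (abs_nonneg _) zero_le_one
            _ = |y i| := one_mul _
      _ = (Fintype.card V : ℝ) * |y i| := by simp [Finset.sum_const, nsmul_eq_mul]
  exact le_trans (le_abs_self μ) (le_of_mul_le_mul_right key hyi)

-- aux 2: Rayleigh quotient value is ≤ the sup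
lemma aux_rayleigh_le {E : Type*} [NormedAddCommGroup E] [InnerProductSpace ℝ E]
    [FiniteDimensional ℝ E] (T : E →ₗ[ℝ] E) (x : { y : E // y ≠ 0 }) :
    (inner ℝ (T x) (x : E) : ℝ) / ‖(x : E)‖ ^ 2 ≤
      ⨆ y : { y : E // y ≠ 0 }, (inner ℝ (T y) (y : E) : ℝ) / ‖(y : E)‖ ^ 2 := by
  apply le_ciSup (f := fun y : { y : E // y ≠ 0 } => (inner ℝ (T y) (y : E) : ℝ) / ‖(y : E)‖ ^ 2)
  refine ⟨‖LinearMap.toContinuousLinearMap T‖, ?_⟩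
  rintro r ⟨y, rfl⟩
  have hy0 : (0:ℝ) < ‖(y:E)‖ := norm_pos_iff.mpr y.2
  have hy : (0:ℝ) < ‖(y:E)‖ ^ 2 := by positivity
  rw [div_le_iff₀ hy]
  calc (inner ℝ (T y) (y:E) : ℝ) ≤ ‖T (y:E)‖ * ‖(y:E)‖ := real_inner_le_norm _ _
    _ ≤ (‖LinearMap.toContinuousLinearMap T‖ * ‖(y:E)‖) * ‖(y:E)‖ := by
        gcongr; exact (LinearMap.toContinuousLinearMap T).le_opNorm _
    _ = ‖LinearMap.toContinuousLinearMap T‖ * ‖(y:E)‖ ^ 2 := by ring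
open Finset
open scoped Classical


theorem spectral_lower_bound_min_edge {V : Type*} [Fintype V]
    (G : SimpleGraph V) (hne : G.edgeSet.Nonempty) :
    sInf {x : ℝ | ∃ u v : V, G.Adj u v ∧
        x = Real.sqrt ((G.degree u : ℝ) * (G.degree v : ℝ))} ≤ specRad G := by
  obtain ⟨u, v, huv⟩ : ∃ u v : V, G.Adj u v := by
    obtain ⟨e, he⟩ := hne
    induction e using Sym2.ind with
    | _ a b => exact ⟨a, b, he⟩
  haveI : Nonempty V := ⟨u⟩
  set S := {x : ℝ | ∃ u v : V, G.Adj u v ∧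
      x = Real.sqrt ((G.degree u : ℝ) * (G.degree v : ℝ))} with hS
  set A := adjMat G with hAdef
  have hHerm : A.IsHermitian := by
    ext i j
    simp [hAdef, adjMat, Matrix.conjTranspose_apply, G.adj_comm]
  have hsym : (Matrix.toEuclideanLin A).IsSymmetric :=
    Matrix.isHermitian_iff_isSymmetric.mp hHerm
  haveI : Nontrivial (EuclideanSpace ℝ V) := inferInstance
  have hev := hsym.hasEigenvalue_iSup_of_finiteDimensional
  set μ := (⨆ x : { x : EuclideanSpace ℝ V // x ≠ 0 },
      RCLike.re (inner ℝ ((Matrix.toEuclideanLin A) ↑x) (x : EuclideanSpace ℝ V) : ℝ) /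
        ‖(x : EuclideanSpace ℝ V)‖ ^ 2 : ℝ) with hμdef
  -- transfer to mulVecLin
  have hmul : Module.End.HasEigenvalue A.mulVecLin μ := by
    obtain ⟨x, hx⟩ := hev.exists_hasEigenvector
    have hx0 : x ≠ 0 := hx.2
    have happ : Matrix.toEuclideanLin A x = μ • x := hx.apply_eq_smul
    refine Module.End.hasEigenvalue_of_hasEigenvector
      (x := WithLp.equiv 2 (V → ℝ) x) ⟨Module.End.mem_eigenspace_iff.mpr ?_, ?_⟩
    · have := congrArg (WithLp.equiv 2 (V → ℝ)) happ
      simpa [Matrix.ofLp_toEuclideanLin_apply, Matrix.mulVecLin_apply] using this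
    · simpa using hx0
  -- μ ≤ specRad
  have hbdd : BddAbove {ν : ℝ | Module.End.HasEigenvalue A.mulVecLin ν} := by
    apply aux_bddAbove
    intro i j
    simp only [hAdef, adjMat]
    split <;> norm_num
  have hμle : μ ≤ specRad G := le_csSup hbdd hmul
  -- sInf S ≤ μ via Rayleigh quotient at x₀ with coordinates sqrt(deg)
  set f : V → ℝ := fun w => Real.sqrt (G.degree w) with hf
  set x₀ : EuclideanSpace ℝ V := (WithLp.equiv 2 (V → ℝ)).symm f with hx₀
  have hdu : 0 < G.degree u := G.degree_pos_iff_exists_adj u |>.mpr ⟨v, huv⟩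
  have hx₀ne : x₀ ≠ 0 := by
    intro h
    have : f u = 0 := by
      have := congrArg (fun z => WithLp.equiv 2 (V → ℝ) z u) h
      simpa [hx₀] using this
    rw [hf] at this
    simp only at this
    have := Real.sqrt_eq_zero (by positivity) |>.mp this
    exact (Nat.cast_pos.mpr hdu).ne' this
  have hSbdd : BddBelow S := by
    refine ⟨0, ?_⟩
    rintro x ⟨i, j, hij, rfl⟩
    exact Real.sqrt_nonneg _
  have hm_le : ∀ i j : V, G.Adj i j → sInf S ≤ Real.sqrt ((G.degree i : ℝ) * (G.degree j : ℝ)) :=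
    fun i j h => csInf_le hSbdd ⟨i, j, h, rfl⟩
  have hdeg : ∀ i : V, (univ.filter (G.Adj i)).card = G.degree i := by
    intro i
    rw [← SimpleGraph.neighborFinset_eq_filter]
    rfl
  have hinner : (inner ℝ ((Matrix.toEuclideanLin A) x₀) x₀ : ℝ) =
      ∑ i, (∑ j, A i j * f j) * f i := by
    rw [hx₀, WithLp.equiv_symm_apply, Matrix.toEuclideanLin_apply_piLp_toLp]
    simp [PiLp.inner_apply, Matrix.mulVec, dotProduct, mul_comm]
  have hnorm : ‖x₀‖ ^ 2 = ∑ i, (G.degree i : ℝ) := by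
    rw [← real_inner_self_eq_norm_sq]
    rw [hx₀]
    simp only [PiLp.inner_apply, WithLp.equiv_symm_apply, PiLp.toLp_apply, RCLike.inner_apply,
      starRingEnd_apply, star_trivial]
    exact Finset.sum_congr rfl fun i _ => by
      rw [hf]; exact Real.mul_self_sqrt (by positivity)
  have hpos : (0:ℝ) < ∑ i, (G.degree i : ℝ) := by
    apply Finset.sum_pos' (fun i _ => by positivity)
    exact ⟨u, Finset.mem_univ u, by exact_mod_cast hdu⟩
  have hlow : sInf S * ∑ i, (G.degree i : ℝ) ≤ ∑ i, (∑ j, A i j * f j) * f i := by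
    have step : ∀ i : V, sInf S * (G.degree i : ℝ) ≤ (∑ j, A i j * f j) * f i := by
      intro i
      rw [Finset.sum_mul]
      have : ∀ j : V, A i j * f j * f i = if G.Adj i j then Real.sqrt ((G.degree i : ℝ) * (G.degree j : ℝ)) else 0 := by
        intro j
        rw [hAdef]
        simp only [adjMat]
        split
        · rw [one_mul, hf]
          rw [← Real.sqrt_mul (by positivity), mul_comm]
        · rw [zero_mul, zero_mul]
      rw [Finset.sum_congr rfl (fun j _ => this j), ← Finset.sum_filter]
      calc sInf S * (G.degree i : ℝ) = ∑ _j ∈ univ.filter (G.Adj i), sInf S := by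
            rw [Finset.sum_const, hdeg i, nsmul_eq_mul, mul_comm]
        _ ≤ ∑ j ∈ univ.filter (G.Adj i), Real.sqrt ((G.degree i : ℝ) * (G.degree j : ℝ)) := by
            refine Finset.sum_le_sum fun j hj => ?_
            exact hm_le i j (Finset.mem_filter.mp hj).2
    calc sInf S * ∑ i, (G.degree i : ℝ) = ∑ i, sInf S * (G.degree i : ℝ) := Finset.mul_sum _ _ _
      _ ≤ _ := Finset.sum_le_sum fun i _ => step i
  have hray : sInf S ≤ (inner ℝ ((Matrix.toEuclideanLin A) x₀) x₀ : ℝ) / ‖x₀‖ ^ 2 := by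
    rw [le_div_iff₀ (by rw [hnorm]; exact hpos)]
    rw [hinner, hnorm]
    exact hlow
  have hray2 : (inner ℝ ((Matrix.toEuclideanLin A) x₀) x₀ : ℝ) / ‖x₀‖ ^ 2 ≤ μ := by
    rw [hμdef]
    simp only [RCLike.re_to_real]
    exact aux_rayleigh_le (Matrix.toEuclideanLin A) ⟨x₀, hx₀ne⟩
  exact le_trans (le_trans hray hray2) hμle
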